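/- Suppose m ≡ 2 (mod 4) and m + 1 ≡ 0 (mod 3), and set p = (m+1)/3. Let j* be the n-tuple with j*_(n−1) = p and all other entries 0. Then j* ∈ J, P(j*) ≠ 0, and V(j*) = 2p − s(p). -/

import Mathlib

open Finset

/-- `s a` is the sum of the binary digits of `a`. -/
def sdig (a : ℕ) : ℕ := (Nat.digits 2 a).sum

/-- `carries a b` is the number of carries when adding `a` and `b` in base 2:
`c(a,b) = s(a) + s(b) - s(a+b)`. -/
def carries (a b : ℕ) : ℕ := sdig a + sdig b - sdig (a + b)

/-- The generalized binomial coefficient `C_r(x) = x(x-1)⋯(x-r+1)/r!` (with `C_0(x) = 1`). -/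
def genBinom (x : ℚ) (r : ℕ) : ℚ :=
  (∏ p ∈ Finset.range r, (x - p)) / (Nat.factorial r : ℚ)

/-- Membership in the index set `J`: here `j i` (for `i : Fin n`) is the paper's
`j_{i+1}`, so the defining relation `(2^n-1)j_1 + ⋯ + (2-1)j_n = m+1` becomes
`∑ k, (2^(n-k) - 1) * j k = m + 1`. -/
def inJ (n m : ℕ) (j : Fin n → ℕ) : Prop :=
  ∑ k : Fin n, (2 ^ (n - (k : ℕ)) - 1) * j k = m + 1

/-- `α_j(k)`: for `K : Fin n`, `alphaF n m j K` is the paper's `α_j(K+1)`, i.e.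
`m / 2^(n-K) - ∑_{I < K} 2^(K-I) j_{I+1}`. -/
def alphaF (n m : ℕ) (j : Fin n → ℕ) (K : Fin n) : ℚ :=
  (m : ℚ) / 2 ^ (n - (K : ℕ)) -
    ∑ I : Fin n, if (I : ℕ) < (K : ℕ) then 2 ^ ((K : ℕ) - (I : ℕ)) * (j I : ℚ) else 0

/-- `P(j) = ∏_{k=1}^n C_{j_k}(α_j(k))`. -/
def Pprod (n m : ℕ) (j : Fin n → ℕ) : ℚ :=
  ∏ k : Fin n, genBinom (alphaF n m j k) (j k)

/-- `V(j) = -ν(P(j))`, where `ν` is the 2-adic valuation on `ℚ`. -/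
def V (n m : ℕ) (j : Fin n → ℕ) : ℤ := - padicValRat 2 (Pprod n m j)

/-- If `m ≡ 2 mod 4`, `m + 1 ≡ 0 mod 3` and `p = (m+1)/3`, then the tuple
`j* = (0, …, 0, p, 0)` lies in `J`, `P(j*) ≠ 0`, and `V(j*) = 2p - s(p)`. -/
theorem stmt17 (n m : ℕ) (hn : 3 ≤ n) (hm : 1 ≤ m) (hmn : m ≤ 2 ^ (n + 1) - 3)
    (h4 : m % 4 = 2) (h3 : (m + 1) % 3 = 0)
    (p : ℕ) (hp : p = (m + 1) / 3)
    (jst : Fin n → ℕ)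
    (hjst : jst = fun k : Fin n => if (k : ℕ) = n - 2 then p else 0) :
    inJ n m jst ∧ Pprod n m jst ≠ 0 ∧
      V n m jst = (2 * p : ℤ) - sdig p := by
  have hK : n - 2 < n := by omega
  set K : Fin n := ⟨n - 2, hK⟩ with hKdef
  have hKval : (K : ℕ) = n - 2 := rfl
  have hjK : jst K = p := by simp [hjst, hKval]
  have hj0 : ∀ k : Fin n, k ≠ K → jst k = 0 := by
    intro k hk
    simp only [hjst]
    rw [if_neg]
    intro h
    exact hk (Fin.ext h)
  obtain ⟨t, ht⟩ : ∃ t, m = 4 * t + 2 := ⟨m / 4, by omega⟩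
  have h3p : 3 * p = m + 1 := by omega
  have hn2 : n - (K : ℕ) = 2 := by omega
  -- inJ
  have hin : inJ n m jst := by
    unfold inJ
    rw [Finset.sum_eq_single K]
    · rw [hjK, hn2]; omega
    · intro k _ hk; rw [hj0 k hk, mul_zero]
    · intro h; exact absurd (Finset.mem_univ K) h
  -- alpha
  have halpha : alphaF n m jst K = (m : ℚ) / 4 := by
    unfold alphaF
    have hsum : (∑ I : Fin n, if (I : ℕ) < (K : ℕ) then
        2 ^ ((K : ℕ) - (I : ℕ)) * (jst I : ℚ) else 0) = 0 := by
      apply Finset.sum_eq_zero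
      intro I _
      split_ifs with h
      · rw [hj0 I (by rintro rfl; exact lt_irrefl _ h), Nat.cast_zero, mul_zero]
      · rfl
    rw [hsum, hn2]
    norm_num
  -- Pprod reduction
  have hP : Pprod n m jst = genBinom ((m : ℚ) / 4) p := by
    unfold Pprod
    rw [Finset.prod_eq_single K]
    · rw [hjK, halpha]
    · intro k _ hk
      rw [hj0 k hk]
      simp [genBinom, Nat.factorial]
    · intro h; exact absurd (Finset.mem_univ K) h
  -- each factor
  have hfac : ∀ i : ℕ, (m : ℚ) / 4 - i = ((2 * t + 1 - 2 * i : ℤ) : ℚ) / 2 := by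
    intro i
    have hm' : (m : ℚ) = 4 * t + 2 := by exact_mod_cast congrArg (Nat.cast (R := ℚ)) ht
    rw [hm']
    push_cast
    ring
  set Q : ℤ := ∏ i ∈ Finset.range p, (2 * (t : ℤ) + 1 - 2 * i) with hQdef
  have hQodd : ¬ (2 : ℤ) ∣ Q := by
    rw [hQdef]
    apply Prime.not_dvd_finset_prod Int.prime_two
    intro i _
    intro hdvd
    omega
  have hQne : Q ≠ 0 := by
    intro h
    rw [h] at hQodd
    exact hQodd (dvd_zero _)
  have hprodeq : (∏ i ∈ Finset.range p, ((m : ℚ) / 4 - (i : ℚ))) = (Q : ℚ) / 2 ^ p := by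
    calc (∏ i ∈ Finset.range p, ((m : ℚ) / 4 - (i : ℚ)))
        = ∏ i ∈ Finset.range p, (((2 * t + 1 - 2 * i : ℤ) : ℚ) / 2) :=
          Finset.prod_congr rfl fun i _ => hfac i
      _ = (∏ i ∈ Finset.range p, ((2 * t + 1 - 2 * i : ℤ) : ℚ)) /
            (∏ _i ∈ Finset.range p, (2 : ℚ)) := Finset.prod_div_distrib _ _
      _ = (Q : ℚ) / 2 ^ p := by
          rw [Finset.prod_const, Finset.card_range, hQdef]
          congr 1
          push_cast
          exact Finset.prod_congr rfl fun i _ => by ring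
  have hPval : Pprod n m jst = ((Q : ℚ) / 2 ^ p) / (Nat.factorial p : ℚ) := by
    rw [hP]
    unfold genBinom
    rw [hprodeq]
  have h2p : (2 : ℚ) ^ p ≠ 0 := by positivity
  have hfact : (Nat.factorial p : ℚ) ≠ 0 := by
    exact_mod_cast Nat.factorial_ne_zero p
  have hQQ : ((Q : ℚ)) ≠ 0 := by exact_mod_cast hQne
  have hnum : (Q : ℚ) / 2 ^ p ≠ 0 := div_ne_zero hQQ h2p
  have hPne : Pprod n m jst ≠ 0 := by
    rw [hPval]
    exact div_ne_zero hnum hfact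
  -- valuations
  have hvQ : padicValRat 2 (Q : ℚ) = 0 := by
    rw [padicValRat.of_int]
    exact_mod_cast padicValInt.eq_zero_of_not_dvd (by exact_mod_cast hQodd)
  have hv2p : padicValRat 2 ((2 : ℚ) ^ p) = p := by
    have : ((2 : ℚ)) ^ p = ((2 ^ p : ℕ) : ℚ) := by push_cast; ring
    rw [this, padicValRat.of_nat, padicValNat.prime_pow]
  have hsle : sdig p ≤ p := Nat.digit_sum_le 2 p
  have hvfact : padicValNat 2 (Nat.factorial p) = p - sdig p := by
    have := sub_one_mul_padicValNat_factorial (p := 2) p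
    simpa [sdig] using this
  have hvP : padicValRat 2 (Pprod n m jst) = -(2 * p : ℤ) + sdig p := by
    rw [hPval, padicValRat.div hnum hfact, padicValRat.div hQQ h2p, hvQ, hv2p,
      padicValRat.of_nat, hvfact]
    have : ((p - sdig p : ℕ) : ℤ) = (p : ℤ) - sdig p := by
      exact Nat.cast_sub hsle
    rw [this]
    ring
  refine ⟨hin, hPne, ?_⟩
  unfold V
  rw [hvP]
  ring
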